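/- arXiv:2401.06422 — 2 statements merged into one kernel-verified Lean document; each statement's English description precedes it below -/
import Mathlib

section
/- With α = arctan(tanφ / sinθ) for 0 < θ < π and 0 < φ < π/2, and B = (cosφ cosθ)² / ((cosφ sinθ)² + sin²φ), the modified elevation angle satisfies tan(φ̃) = sin(α − η) / √(B + cos²(α − η)), where φ̃ = arcsin(sinφ cosη − cosφ sinθ sinη) and η ∈ (−π/2 + α, π/2 + α). -/
open Real

theorem tan_modified_elevation (θ φ η : ℝ)
    (hθ : 0 < θ) (hθ' : θ < π)
    (hφ : 0 < φ) (hφ' : φ < π / 2)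
    (α B : ℝ)
    (hα : α = Real.arctan (Real.tan φ / Real.sin θ))
    (hB : B = (Real.cos φ * Real.cos θ) ^ 2 /
        ((Real.cos φ * Real.sin θ) ^ 2 + Real.sin φ ^ 2))
    (hη : -(π / 2) + α < η) (hη' : η < π / 2 + α) :
    Real.tan (Real.arcsin (Real.sin φ * Real.cos η - Real.cos φ * Real.sin θ * Real.sin η)) =
      Real.sin (α - η) / Real.sqrt (B + Real.cos (α - η) ^ 2) := by
  have hsθ : 0 < Real.sin θ := Real.sin_pos_of_pos_of_lt_pi hθ hθ'
  have hc : 0 < Real.cos φ := Real.cos_pos_of_mem_Ioo ⟨by linarith [Real.pi_pos], hφ'⟩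
  have hs : 0 < Real.sin φ := Real.sin_pos_of_pos_of_lt_pi hφ (by linarith [Real.pi_pos])
  have hcs : 0 < Real.cos φ * Real.sin θ := mul_pos hc hsθ
  set r2 : ℝ := Real.sin φ ^ 2 + (Real.cos φ * Real.sin θ) ^ 2 with hr2def
  have hr2 : 0 < r2 := by positivity
  set r : ℝ := Real.sqrt r2 with hrdef
  have hr : 0 < r := Real.sqrt_pos.mpr hr2
  have hrsq : r ^ 2 = r2 := Real.sq_sqrt hr2.le
  -- sqrt (1 + t^2)
  have ht : Real.tan φ / Real.sin θ = Real.sin φ / (Real.cos φ * Real.sin θ) := by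
    rw [Real.tan_eq_sin_div_cos]; field_simp
  have h1 : 1 + (Real.tan φ / Real.sin θ) ^ 2 = r2 / (Real.cos φ * Real.sin θ) ^ 2 := by
    rw [ht, hr2def]; field_simp; ring
  have hsq1 : Real.sqrt (1 + (Real.tan φ / Real.sin θ) ^ 2)
      = r / (Real.cos φ * Real.sin θ) := by
    rw [h1, Real.sqrt_div hr2.le, Real.sqrt_sq hcs.le]
  have hcosα : Real.cos α = Real.cos φ * Real.sin θ / r := by
    rw [hα, Real.cos_arctan, hsq1]
    field_simp
  have hsinα : Real.sin α = Real.sin φ / r := by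
    rw [hα, Real.sin_arctan, hsq1, ht]
    field_simp
  set x : ℝ := Real.sin φ * Real.cos η - Real.cos φ * Real.sin θ * Real.sin η with hxdef
  have hx : x = r * Real.sin (α - η) := by
    rw [Real.sin_sub, hsinα, hcosα]
    field_simp
    exact hxdef
  have hcosp : 0 < Real.cos (α - η) :=
    Real.cos_pos_of_mem_Ioo ⟨by linarith, by linarith⟩
  have hone : 1 - r2 = (Real.cos φ * Real.cos θ) ^ 2 := by
    have h1 := Real.sin_sq_add_cos_sq φ
    have h2 := Real.sin_sq_add_cos_sq θ
    rw [hr2def]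
    linear_combination (-1 : ℝ) * h1 - Real.cos φ ^ 2 * h2
  have he : (Real.cos φ * Real.sin θ) ^ 2 + Real.sin φ ^ 2 = r2 := by
    rw [hr2def]; ring
  have hkey : B + Real.cos (α - η) ^ 2 = (1 - x ^ 2) / r ^ 2 := by
    rw [hB, he, hx, mul_pow, hrsq]
    have hsc := Real.sin_sq_add_cos_sq (α - η)
    field_simp
    linear_combination r2 * hsc - hone + Real.sin (α - η) ^ 2 * (hrsq.trans hr2def)
  have hB0 : 0 ≤ B := by rw [hB]; positivity
  have hBpos : 0 < B + Real.cos (α - η) ^ 2 :=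
    add_pos_of_nonneg_of_pos hB0 (pow_pos hcosp 2)
  have h1x : 0 < 1 - x ^ 2 := by
    have h : 1 - x ^ 2 = (B + Real.cos (α - η) ^ 2) * r ^ 2 := by
      rw [hkey]; field_simp
    rw [h]
    exact mul_pos hBpos (pow_pos hr 2)
  have hsqrtkey : Real.sqrt (B + Real.cos (α - η) ^ 2) = Real.sqrt (1 - x ^ 2) / r := by
    rw [hkey, Real.sqrt_div h1x.le, Real.sqrt_sq hr.le]
  have hsx : 0 < Real.sqrt (1 - x ^ 2) := Real.sqrt_pos.mpr h1x
  rw [Real.tan_arcsin, hsqrtkey, hx]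
  field_simp
end

section
/- Let f(η) = sin^k(φ̃_A(η)) · sin^k(φ̃_D(η)) where φ̃_A(η) = arcsin(c_A sin(α_A − η)) and φ̃_D(η) = arcsin(c_D sin(η − α_D)) with constants c_A, c_D ∈ (0,1], α_D < α_A, α_A − α_D < π, and k ≥ 1 an even natural number (or any k with the sines nonnegative on [α_D, α_A]). If additionally c_A = c_D, then f is maximized over η ∈ [α_D, α_A] at the midpoint η* = (α_A + α_D)/2. -/
open Real

set_option maxHeartbeats 1000000

theorem radiation_pattern_max_at_midpoint
    (cA cD αA αD : ℝ) (k : ℕ)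
    (hcA : 0 < cA) (hcA' : cA ≤ 1) (hcD : 0 < cD) (hcD' : cD ≤ 1)
    (hα : αD < αA) (hαπ : αA - αD < π)
    (hk : 1 ≤ k) (hkeven : Even k)
    (hc : cA = cD)
    (f : ℝ → ℝ)
    (hf : ∀ η, f η =
        Real.sin (Real.arcsin (cA * Real.sin (αA - η))) ^ k *
        Real.sin (Real.arcsin (cD * Real.sin (η - αD))) ^ k) :
    ∀ η ∈ Set.Icc αD αA, f η ≤ f ((αA + αD) / 2) := by
  intro η hη
  obtain ⟨h1, h2⟩ := hη
  have hπ := Real.pi_pos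
  have ha0 : 0 ≤ αA - η := by linarith
  have haπ : αA - η ≤ π := by linarith
  have hb0 : 0 ≤ η - αD := by linarith
  have hbπ : η - αD ≤ π := by linarith
  have sa0 : 0 ≤ Real.sin (αA - η) := Real.sin_nonneg_of_nonneg_of_le_pi ha0 haπ
  have sb0 : 0 ≤ Real.sin (η - αD) := Real.sin_nonneg_of_nonneg_of_le_pi hb0 hbπ
  have sm0 : 0 ≤ Real.sin ((αA - αD)/2) :=
    Real.sin_nonneg_of_nonneg_of_le_pi (by linarith) (by linarith)
  have sa1 : Real.sin (αA - η) ≤ 1 := Real.sin_le_one _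
  have sb1 : Real.sin (η - αD) ≤ 1 := Real.sin_le_one _
  have sm1 : Real.sin ((αA - αD)/2) ≤ 1 := Real.sin_le_one _
  have e1 : Real.sin (Real.arcsin (cA * Real.sin (αA - η))) = cA * Real.sin (αA - η) :=
    Real.sin_arcsin (by nlinarith) (by nlinarith)
  have e2 : Real.sin (Real.arcsin (cD * Real.sin (η - αD))) = cD * Real.sin (η - αD) :=
    Real.sin_arcsin (by nlinarith) (by nlinarith)
  have emid1 : αA - (αA + αD)/2 = (αA - αD)/2 := by ring
  have emid2 : (αA + αD)/2 - αD = (αA - αD)/2 := by ring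
  have e3 : Real.sin (Real.arcsin (cA * Real.sin ((αA - αD)/2))) = cA * Real.sin ((αA - αD)/2) :=
    Real.sin_arcsin (by nlinarith) (by nlinarith)
  have e4 : Real.sin (Real.arcsin (cD * Real.sin ((αA - αD)/2))) = cD * Real.sin ((αA - αD)/2) :=
    Real.sin_arcsin (by nlinarith) (by nlinarith)
  rw [hf η, hf ((αA + αD)/2), e1, e2, emid1, emid2, e3, e4]
  -- key inequality: sin a * sin b ≤ sin(s/2)^2 when a + b = s
  have key : Real.sin (αA - η) * Real.sin (η - αD) ≤ Real.sin ((αA - αD)/2) ^ 2 := by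
    have hcle : Real.cos ((αA - η) - (η - αD)) ≤ 1 := Real.cos_le_one _
    have expand : Real.sin (αA - η) * Real.sin (η - αD)
        = (Real.cos ((αA - η) - (η - αD)) - Real.cos (αA - αD)) / 2 := by
      have hsum : αA - αD = (αA - η) + (η - αD) := by ring
      rw [hsum, Real.cos_sub, Real.cos_add]; ring
    have hsq : Real.sin ((αA - αD)/2) ^ 2 = (1 - Real.cos (αA - αD)) / 2 := by
      have h1 := Real.sin_sq_add_cos_sq ((αA - αD)/2)
      have h2 := Real.cos_sq ((αA - αD)/2)
      rw [show 2*((αA - αD)/2) = αA - αD by ring] at h2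
      linarith
    rw [expand, hsq]
    linarith
  calc (cA * Real.sin (αA - η)) ^ k * (cD * Real.sin (η - αD)) ^ k
      = (cA * cD * (Real.sin (αA - η) * Real.sin (η - αD))) ^ k := by
        rw [← mul_pow]; ring_nf
    _ ≤ (cA * cD * (Real.sin ((αA - αD)/2) * Real.sin ((αA - αD)/2))) ^ k := by
        have key' : Real.sin (αA - η) * Real.sin (η - αD)
            ≤ Real.sin ((αA - αD)/2) * Real.sin ((αA - αD)/2) := by
          rw [pow_two] at key; exact key
        exact pow_le_pow_left₀ (mul_nonneg (mul_nonneg hcA.le hcD.le) (mul_nonneg sa0 sb0))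
          (mul_le_mul_of_nonneg_left key' (mul_nonneg hcA.le hcD.le)) k
    _ = (cA * Real.sin ((αA - αD)/2)) ^ k * (cD * Real.sin ((αA - αD)/2)) ^ k := by
        rw [← mul_pow]; ring_nf
end
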